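/- Any sequence of n pairs of integers can be partitioned into O(n^{3/4}) monotonic subsequences; concretely, into at most 10·⌈n^{3/4}⌉ parts, where in each part both coordinate sequences are monotonic. -/

import Mathlib

open Finset

open Classical in
noncomputable def chainsOf {n : ℕ} (P : Finset (Fin n) → Prop) (S : Finset (Fin n)) (i : Fin n) :
    Finset (Finset (Fin n)) :=
  S.powerset.filter (fun c => i ∈ c ∧ (∀ j ∈ c, j ≤ i) ∧ P c)

noncomputable def chainLen {n : ℕ} (P : Finset (Fin n) → Prop) (S : Finset (Fin n)) (i : Fin n) : ℕ :=
  (chainsOf P S i).sup Finset.card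

lemma mem_chainsOf {n : ℕ} {P : Finset (Fin n) → Prop} {S : Finset (Fin n)} {i : Fin n}
    {c : Finset (Fin n)} :
    c ∈ chainsOf P S i ↔ c ⊆ S ∧ i ∈ c ∧ (∀ j ∈ c, j ≤ i) ∧ P c := by
  classical
  unfold chainsOf
  rw [Finset.mem_filter, Finset.mem_powerset]

lemma singleton_mem_chainsOf {n : ℕ} {P : Finset (Fin n) → Prop} {S : Finset (Fin n)} {i : Fin n}
    (hi : i ∈ S) (hP : P {i}) : ({i} : Finset (Fin n)) ∈ chainsOf P S i := by
  rw [mem_chainsOf]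
  refine ⟨by simpa using hi, by simp, ?_, hP⟩
  intro j hj; simp at hj; simp [hj]

lemma chainLen_exists {n : ℕ} {P : Finset (Fin n) → Prop} {S : Finset (Fin n)} {i : Fin n}
    (hi : i ∈ S) (hP : P {i}) :
    ∃ c ∈ chainsOf P S i, c.card = chainLen P S i := by
  obtain ⟨c, hc, hval⟩ := Finset.exists_mem_eq_sup (chainsOf P S i)
    ⟨{i}, singleton_mem_chainsOf hi hP⟩ Finset.card
  exact ⟨c, hc, hval.symm⟩

lemma one_le_chainLen {n : ℕ} {P : Finset (Fin n) → Prop} {S : Finset (Fin n)} {i : Fin n}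
    (hi : i ∈ S) (hP : P {i}) : 1 ≤ chainLen P S i := by
  have := Finset.le_sup (f := Finset.card) (singleton_mem_chainsOf (P := P) hi hP)
  simpa [chainLen] using this

lemma chainLen_le {n : ℕ} {P : Finset (Fin n) → Prop} {S : Finset (Fin n)} {i : Fin n} {k : ℕ}
    (h : ∀ c, c ⊆ S → P c → c.card ≤ k) : chainLen P S i ≤ k := by
  refine Finset.sup_le fun c hc => ?_
  rw [mem_chainsOf] at hc
  exact h c hc.1 hc.2.2.2

lemma chainLen_lt_chainLen {n : ℕ} {P : Finset (Fin n) → Prop} {S : Finset (Fin n)} {i j : Fin n}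
    (hi : i ∈ S) (hj : j ∈ S) (hij : i < j) (hPi : P {i})
    (hins : ∀ c ∈ chainsOf P S i, P (insert j c)) :
    chainLen P S i < chainLen P S j := by
  obtain ⟨c, hc, hcard⟩ := chainLen_exists hi hPi
  have hc' := hc
  rw [mem_chainsOf] at hc'
  obtain ⟨hcS, hic, hle, hPc⟩ := hc'
  have hjnc : j ∉ c := fun h => absurd (hle j h) (not_le.mpr hij)
  have hmem : insert j c ∈ chainsOf P S j := by
    rw [mem_chainsOf]
    refine ⟨Finset.insert_subset hj hcS, Finset.mem_insert_self _ _, ?_, hins c hc⟩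
    intro p hp
    rcases Finset.mem_insert.mp hp with h | h
    · exact h.le
    · exact (hle p h).trans hij.le
  have := Finset.le_sup (f := Finset.card) hmem
  rw [Finset.card_insert_of_notMem hjnc, hcard] at this
  exact lt_of_lt_of_le (Nat.lt_succ_self _) this

lemma monoOn_singleton {n : ℕ} (b : Fin n → ℤ) (i : Fin n) :
    MonotoneOn b (↑({i} : Finset (Fin n))) := by
  apply Set.Subsingleton.monotoneOn
  simp

lemma antiOn_singleton {n : ℕ} (b : Fin n → ℤ) (i : Fin n) :
    AntitoneOn b (↑({i} : Finset (Fin n))) := by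
  apply Set.Subsingleton.antitoneOn
  simp

lemma es_lemma {n : ℕ} (b : Fin n → ℤ) (S : Finset (Fin n)) (k : ℕ)
    (h : k * k < S.card) :
    ∃ c : Finset (Fin n), c ⊆ S ∧ k < c.card ∧
      (MonotoneOn b ↑c ∨ AntitoneOn b ↑c) := by
  classical
  by_contra hcon
  push_neg at hcon
  -- every mono or anti chain inside S has card ≤ k
  have hbound : ∀ c : Finset (Fin n), c ⊆ S → (MonotoneOn b ↑c ∨ AntitoneOn b ↑c) → c.card ≤ k := by
    intro c hcS hmono
    by_contra hk
    obtain ⟨h1, h2⟩ := hcon c hcS (not_le.mp hk)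
    tauto
  set PU : Finset (Fin n) → Prop := fun c => MonotoneOn b ↑c with hPU
  set PD : Finset (Fin n) → Prop := fun c => AntitoneOn b ↑c with hPD
  have hUins : ∀ (i j : Fin n), i < j → b i ≤ b j →
      ∀ c ∈ chainsOf PU S i, PU (insert j c) := by
    intro i j hij hbij c hc
    rw [mem_chainsOf] at hc
    obtain ⟨hcS, hic, hle, hPc⟩ := hc
    intro p hp q hq hpq
    rw [Finset.coe_insert, Set.mem_insert_iff] at hp hq
    rcases hp with hp | hp <;> rcases hq with hq | hq
    · subst hp; subst hq; exact le_refl _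
    · subst hp
      exfalso
      exact absurd ((hle q hq).trans_lt hij) (not_lt.mpr hpq)
    · subst hq
      exact (hPc hp hic (hle p hp)).trans hbij
    · exact hPc hp hq hpq
  have hDins : ∀ (i j : Fin n), i < j → b j ≤ b i →
      ∀ c ∈ chainsOf PD S i, PD (insert j c) := by
    intro i j hij hbij c hc
    rw [mem_chainsOf] at hc
    obtain ⟨hcS, hic, hle, hPc⟩ := hc
    intro p hp q hq hpq
    rw [Finset.coe_insert, Set.mem_insert_iff] at hp hq
    rcases hp with hp | hp <;> rcases hq with hq | hq
    · subst hp; subst hq; exact le_refl _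
    · subst hp
      exfalso
      exact absurd ((hle q hq).trans_lt hij) (not_lt.mpr hpq)
    · subst hq
      exact hbij.trans (hPc hp hic (hle p hp))
    · exact hPc hp hq hpq
  have hinj : Set.InjOn (fun i => (chainLen PU S i - 1, chainLen PD S i - 1)) ↑S := by
    intro i hiS j hjS hval
    by_contra hne
    simp only [Prod.mk.injEq] at hval
    rcases lt_or_gt_of_ne (fun h => hne h) with hij | hij
    · have h1 : 1 ≤ chainLen PU S i := one_le_chainLen hiS (monoOn_singleton b i)
      have h2 : 1 ≤ chainLen PD S i := one_le_chainLen hiS (antiOn_singleton b i)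
      have h3 : 1 ≤ chainLen PU S j := one_le_chainLen hjS (monoOn_singleton b j)
      have h4 : 1 ≤ chainLen PD S j := one_le_chainLen hjS (antiOn_singleton b j)
      rcases le_total (b i) (b j) with hb | hb
      · have := chainLen_lt_chainLen hiS hjS hij (monoOn_singleton b i) (hUins i j hij hb)
        omega
      · have := chainLen_lt_chainLen hiS hjS hij (antiOn_singleton b i) (hDins i j hij hb)
        omega
    · have h1 : 1 ≤ chainLen PU S j := one_le_chainLen hjS (monoOn_singleton b j)
      have h2 : 1 ≤ chainLen PD S j := one_le_chainLen hjS (antiOn_singleton b j)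
      have h3 : 1 ≤ chainLen PU S i := one_le_chainLen hiS (monoOn_singleton b i)
      have h4 : 1 ≤ chainLen PD S i := one_le_chainLen hiS (antiOn_singleton b i)
      rcases le_total (b j) (b i) with hb | hb
      · have := chainLen_lt_chainLen hjS hiS hij (monoOn_singleton b j) (hUins j i hij hb)
        omega
      · have := chainLen_lt_chainLen hjS hiS hij (antiOn_singleton b j) (hDins j i hij hb)
        omega
  have hmaps : ∀ i ∈ S, (chainLen PU S i - 1, chainLen PD S i - 1) ∈ Finset.range k ×ˢ Finset.range k := by
    intro i hiS
    have hu1 : 1 ≤ chainLen PU S i := one_le_chainLen hiS (monoOn_singleton b i)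
    have hd1 : 1 ≤ chainLen PD S i := one_le_chainLen hiS (antiOn_singleton b i)
    have huk : chainLen PU S i ≤ k := chainLen_le (fun c hc hm => hbound c hc (Or.inl hm))
    have hdk : chainLen PD S i ≤ k := chainLen_le (fun c hc hm => hbound c hc (Or.inr hm))
    simp only [Finset.mem_product, Finset.mem_range]
    omega
  have := Finset.card_le_card_of_injOn _ hmaps hinj
  rw [Finset.card_product, Finset.card_range] at this
  omega
lemma onedim {n : ℕ} (b : Fin n → ℤ) :
    ∀ k : ℕ, ∀ S : Finset (Fin n), S.card ≤ k * k →
    ∃ L : List (Finset (Fin n)),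
      (∀ c ∈ L, c ⊆ S ∧ (MonotoneOn b ↑c ∨ AntitoneOn b ↑c)) ∧
      (∀ i ∈ S, ∃ c ∈ L, i ∈ c) ∧
      (L.map Finset.card).sum ≤ S.card ∧
      L.length ≤ 2 * k := by
  intro k
  induction k with
  | zero =>
    intro S hS
    refine ⟨[], by simp, ?_, by simp, by simp⟩
    intro i hi
    simp at hS
    simp [hS] at hi
  | succ k ih =>
    intro S hS
    by_cases h1 : S.card ≤ k * k
    · obtain ⟨L, hL1, hL2, hL3, hL4⟩ := ih S h1
      exact ⟨L, hL1, hL2, hL3, hL4.trans (by omega)⟩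
    · push_neg at h1
      obtain ⟨c₁, hc₁S, hc₁card, hc₁mono⟩ := es_lemma b S k h1
      set S₁ := S \ c₁ with hS₁
      have hS₁card : S₁.card = S.card - c₁.card := Finset.card_sdiff_of_subset hc₁S
      have hc₁le : c₁.card ≤ S.card := Finset.card_le_card hc₁S
      by_cases h2 : S₁.card ≤ k * k
      · obtain ⟨L, hL1, hL2, hL3, hL4⟩ := ih S₁ h2
        refine ⟨c₁ :: L, ?_, ?_, ?_, ?_⟩
        · intro c hc
          rcases List.mem_cons.mp hc with rfl | hc
          · exact ⟨hc₁S, hc₁mono⟩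
          · exact ⟨(hL1 c hc).1.trans (Finset.sdiff_subset), (hL1 c hc).2⟩
        · intro i hi
          by_cases hic : i ∈ c₁
          · exact ⟨c₁, List.mem_cons_self, hic⟩
          · obtain ⟨c, hcL, hic'⟩ := hL2 i (Finset.mem_sdiff.mpr ⟨hi, hic⟩)
            exact ⟨c, List.mem_cons_of_mem _ hcL, hic'⟩
        · simp only [List.map_cons, List.sum_cons]
          omega
        · simp only [List.length_cons]
          omega
      · push_neg at h2
        obtain ⟨c₂, hc₂S, hc₂card, hc₂mono⟩ := es_lemma b S₁ k h2
        set S₂ := S₁ \ c₂ with hS₂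
        have hS₂card : S₂.card = S₁.card - c₂.card := Finset.card_sdiff_of_subset hc₂S
        have hc₂le : c₂.card ≤ S₁.card := Finset.card_le_card hc₂S
        have hsq : (k + 1) * (k + 1) = k * k + 2 * k + 1 := by ring
        have hS₂k : S₂.card ≤ k * k := by omega
        obtain ⟨L, hL1, hL2, hL3, hL4⟩ := ih S₂ hS₂k
        have hS₁sub : S₁ ⊆ S := Finset.sdiff_subset
        refine ⟨c₁ :: c₂ :: L, ?_, ?_, ?_, ?_⟩
        · intro c hc
          rcases List.mem_cons.mp hc with rfl | hc
          · exact ⟨hc₁S, hc₁mono⟩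
          rcases List.mem_cons.mp hc with rfl | hc
          · exact ⟨hc₂S.trans hS₁sub, hc₂mono⟩
          · exact ⟨((hL1 c hc).1.trans Finset.sdiff_subset).trans hS₁sub, (hL1 c hc).2⟩
        · intro i hi
          by_cases hic : i ∈ c₁
          · exact ⟨c₁, by simp, hic⟩
          by_cases hic2 : i ∈ c₂
          · exact ⟨c₂, by simp, hic2⟩
          · have : i ∈ S₂ := Finset.mem_sdiff.mpr ⟨Finset.mem_sdiff.mpr ⟨hi, hic⟩, hic2⟩
            obtain ⟨c, hcL, hic'⟩ := hL2 i this
            exact ⟨c, by simp [hcL], hic'⟩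
        · simp only [List.map_cons, List.sum_cons]
          omega
        · simp only [List.length_cons]
          omega
lemma sum_map_two_mul_succ {α : Type*} (l : List α) (g : α → ℕ) :
    (l.map (fun c => 2 * (g c + 1))).sum = 2 * (l.map g).sum + 2 * l.length := by
  induction l with
  | nil => simp
  | cons c l ih => simp only [List.map_cons, List.sum_cons, List.length_cons, ih]; ring

lemma sum_map_div_helper {α : Type*} (l : List α) (h : α → ℝ) (E D : ℝ) :
    (l.map (fun c => (h c + E) / D)).sum = ((l.map h).sum + l.length * E) / D := by
  induction l with
  | nil => simp
  | cons c l ih =>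
    simp only [List.map_cons, List.sum_cons, List.length_cons, ih, ← add_div]
    congr 1
    push_cast
    ring

theorem partition_pairs (n : ℕ) (a : Fin n → ℤ × ℤ) :
    ∃ (t : ℕ) (f : Fin n → Fin t), t ≤ 10 * ⌈(n : ℝ) ^ ((3 : ℝ) / 4)⌉₊ ∧
      ∀ p : Fin t,
        (MonotoneOn (fun i => (a i).1) {i | f i = p} ∨
          AntitoneOn (fun i => (a i).1) {i | f i = p}) ∧
        (MonotoneOn (fun i => (a i).2) {i | f i = p} ∨
          AntitoneOn (fun i => (a i).2) {i | f i = p}) := by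
  classical
  by_cases hsmall : n ≤ 10
  · -- use singleton parts
    refine ⟨n, fun i => i, ?_, ?_⟩
    · rcases Nat.eq_zero_or_pos n with rfl | hn
      · simp
      · have h1 : (0:ℝ) < (n:ℝ) ^ ((3:ℝ)/4) :=
          Real.rpow_pos_of_pos (by exact_mod_cast hn) _
        have : 1 ≤ ⌈(n : ℝ) ^ ((3 : ℝ) / 4)⌉₊ := by
          rwa [Nat.one_le_ceil_iff]
        omega
    · intro p
      have hsub : ({i | (fun (i : Fin n) => i) i = p} : Set (Fin n)).Subsingleton := by
        intro x hx y hy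
        simp only [Set.mem_setOf_eq] at hx hy
        rw [hx, hy]
      exact ⟨Or.inl (hsub.monotoneOn _), Or.inl (hsub.monotoneOn _)⟩
  · push_neg at hsmall
    set b₁ : Fin n → ℤ := fun i => (a i).1 with hb₁
    set b₂ : Fin n → ℤ := fun i => (a i).2 with hb₂
    have hcard : (Finset.univ : Finset (Fin n)).card = n := by simp
    have hk1 : (Finset.univ : Finset (Fin n)).card ≤ (Nat.sqrt n + 1) * (Nat.sqrt n + 1) := by
      rw [hcard]; exact (Nat.lt_succ_sqrt n).le
    obtain ⟨L, hL1, hL2, hL3, hL4⟩ := onedim b₁ (Nat.sqrt n + 1) Finset.univ hk1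
    have H : ∀ c : Finset (Fin n), ∃ M : List (Finset (Fin n)),
        (∀ d ∈ M, d ⊆ c ∧ (MonotoneOn b₂ ↑d ∨ AntitoneOn b₂ ↑d)) ∧
        (∀ i ∈ c, ∃ d ∈ M, i ∈ d) ∧
        (M.map Finset.card).sum ≤ c.card ∧
        M.length ≤ 2 * (Nat.sqrt c.card + 1) :=
      fun c => onedim b₂ (Nat.sqrt c.card + 1) c (Nat.lt_succ_sqrt c.card).le
    choose g hg1 hg2 hg3 hg4 using H
    set M : List (Finset (Fin n)) := L.flatMap g with hM
    have hprop : ∀ d ∈ M, (MonotoneOn b₁ ↑d ∨ AntitoneOn b₁ ↑d) ∧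
        (MonotoneOn b₂ ↑d ∨ AntitoneOn b₂ ↑d) := by
      intro d hd
      obtain ⟨c, hcL, hdgc⟩ := List.mem_flatMap.mp hd
      obtain ⟨hdc, hmono2⟩ := hg1 c d hdgc
      have hsubdc : (↑d : Set (Fin n)) ⊆ ↑c := Finset.coe_subset.mpr hdc
      refine ⟨?_, hmono2⟩
      rcases (hL1 c hcL).2 with h | h
      · exact Or.inl (h.mono hsubdc)
      · exact Or.inr (h.mono hsubdc)
    have hcover : ∀ i : Fin n, ∃ d ∈ M, i ∈ d := by
      intro i
      obtain ⟨c, hcL, hic⟩ := hL2 i (Finset.mem_univ i)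
      obtain ⟨d, hdgc, hid⟩ := hg2 c i hic
      exact ⟨d, List.mem_flatMap.mpr ⟨c, hcL, hdgc⟩, hid⟩
    have hlt : ∀ i : Fin n, M.findIdx (fun d => decide (i ∈ d)) < M.length := by
      intro i
      obtain ⟨d, hdM, hid⟩ := hcover i
      exact List.findIdx_lt_length_of_exists ⟨d, hdM, by simp [hid]⟩
    refine ⟨M.length, fun i => ⟨M.findIdx (fun d => decide (i ∈ d)), hlt i⟩, ?_, ?_⟩
    · -- numeric bound
      set K := L.length with hK
      set A := (L.map (fun c => Nat.sqrt c.card)).sum with hA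
      have htA : M.length ≤ 2 * A + 2 * K := by
        rw [hM, List.length_flatMap]
        calc (L.map (List.length ∘ g)).sum
            ≤ (L.map (fun c => 2 * (Nat.sqrt c.card + 1))).sum :=
              List.sum_le_sum (fun c _ => hg4 c)
          _ = 2 * A + 2 * K := sum_map_two_mul_succ L _
      set x : ℝ := (n : ℝ) with hx
      have hx11 : (11 : ℝ) ≤ x := by
        have h11 : 11 ≤ n := hsmall
        rw [hx]
        exact_mod_cast h11
      have hx0 : (0 : ℝ) < x := by linarith
      have hx1 : (1 : ℝ) ≤ x := by linarith
      set T : ℝ := x ^ ((1:ℝ)/4) with hT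
      have hT0 : (0 : ℝ) < T := Real.rpow_pos_of_pos hx0 _
      have hsqrtcast : ∀ m : ℕ, ((Nat.sqrt m : ℕ) : ℝ) ≤ Real.sqrt m := by
        intro m
        rw [Real.le_sqrt (by positivity) (by positivity)]
        have h := Nat.sqrt_le' m
        calc ((Nat.sqrt m : ℕ) : ℝ) ^ 2 = ((Nat.sqrt m ^ 2 : ℕ) : ℝ) := by
              push_cast; ring
          _ ≤ (m : ℝ) := Nat.cast_le.mpr h
      have hsqrtT : ∀ m : ℕ, Real.sqrt m ≤ ((m : ℝ) + T^2) / (2 * T) := by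
        intro m
        rw [le_div_iff₀ (by positivity)]
        nlinarith [sq_nonneg (Real.sqrt m - T), Real.sq_sqrt (by positivity : (0:ℝ) ≤ (m:ℝ))]
      have hAle : (A : ℝ) ≤ (x + K * T^2) / (2 * T) := by
        have e1 : (A : ℝ) = (L.map (fun c => ((Nat.sqrt c.card : ℕ) : ℝ))).sum := by
          rw [hA, Nat.cast_list_sum, List.map_map]; rfl
        have e2 : (L.map (fun c => ((Nat.sqrt c.card : ℕ) : ℝ))).sum
            ≤ (L.map (fun c => (((c.card : ℕ) : ℝ) + T^2) / (2 * T))).sum :=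
          List.sum_le_sum (fun c _ => (hsqrtcast c.card).trans (hsqrtT c.card))
        have e3 : (L.map (fun c => (((c.card : ℕ) : ℝ) + T^2) / (2 * T))).sum
            = ((L.map (fun c => ((c.card : ℕ) : ℝ))).sum + K * T^2) / (2 * T) :=
          sum_map_div_helper L _ _ _
        have e4 : (L.map (fun c => ((c.card : ℕ) : ℝ))).sum ≤ x := by
          have h5 : ((L.map Finset.card).sum : ℝ) ≤ x :=
            Nat.cast_le.mpr (hL3.trans hcard.le)
          calc (L.map (fun c => ((c.card : ℕ) : ℝ))).sum
              = ((L.map Finset.card).sum : ℝ) := by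
                rw [Nat.cast_list_sum, List.map_map]; rfl
            _ ≤ x := h5
        calc (A : ℝ) ≤ ((L.map (fun c => ((c.card : ℕ) : ℝ))).sum + K * T^2) / (2 * T) := by
              rw [e1, ← e3]; exact e2
          _ ≤ (x + K * T^2) / (2 * T) := by
              gcongr
      have hsqx : Real.sqrt x = x ^ ((1:ℝ)/2) := Real.sqrt_eq_rpow x
      have h1sq : (1:ℝ) ≤ Real.sqrt x := by
        rw [show (1:ℝ) = Real.sqrt 1 by simp]
        exact Real.sqrt_le_sqrt hx1
      have hKle : (K : ℝ) ≤ 4 * x ^ ((1:ℝ)/2) := by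
        have h6 : (K : ℝ) ≤ 2 * ((Nat.sqrt n : ℕ) + 1 : ℝ) := by exact_mod_cast hL4
        have h7 : ((Nat.sqrt n : ℕ) : ℝ) ≤ Real.sqrt x := by
          have := hsqrtcast n; rwa [hx]
        rw [← hsqx]
        linarith
      have e7 : x ^ ((1:ℝ)/2) * x ^ ((1:ℝ)/4) = x ^ ((3:ℝ)/4) := by
        rw [← Real.rpow_add hx0]; norm_num
      have e6 : x / T = x ^ ((3:ℝ)/4) := by
        rw [div_eq_iff hT0.ne', hT, ← Real.rpow_add hx0]
        norm_num
      have h85 : (8:ℝ)/5 ≤ T := by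
        have h8 : ((4096/625 : ℝ)) ^ ((1:ℝ)/4) ≤ x ^ ((1:ℝ)/4) :=
          Real.rpow_le_rpow (by norm_num) (by linarith) (by norm_num)
        have h9 : ((4096/625 : ℝ)) ^ ((1:ℝ)/4) = 8/5 := by
          rw [show (4096/625 : ℝ) = (8/5)^(4:ℕ) by norm_num,
            ← Real.rpow_natCast ((8:ℝ)/5) 4, ← Real.rpow_mul (by norm_num)]
          norm_num
        rw [hT]; linarith [h8, h9.symm.le]
      have hx120 : (0:ℝ) < x ^ ((1:ℝ)/2) := Real.rpow_pos_of_pos hx0 _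
      have c1 : (K : ℝ) * T ≤ 4 * x ^ ((3:ℝ)/4) := by
        calc (K : ℝ) * T ≤ (4 * x ^ ((1:ℝ)/2)) * T :=
              mul_le_mul_of_nonneg_right hKle hT0.le
          _ = 4 * (x ^ ((1:ℝ)/2) * x ^ ((1:ℝ)/4)) := by rw [hT]; ring
          _ = 4 * x ^ ((3:ℝ)/4) := by rw [e7]
      have c2 : 2 * (K : ℝ) ≤ 5 * x ^ ((3:ℝ)/4) := by
        have h10 : 2 * (K : ℝ) ≤ 8 * x ^ ((1:ℝ)/2) := by linarith
        have h11 : 8 * x ^ ((1:ℝ)/2) ≤ 5 * (T * x ^ ((1:ℝ)/2)) := by nlinarith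
        have h12 : T * x ^ ((1:ℝ)/2) = x ^ ((3:ℝ)/4) := by
          rw [hT, mul_comm]; exact e7
        linarith [h11, h12.le]
      have e5 : 2 * ((x + K * T^2) / (2 * T)) = x / T + K * T := by
        field_simp
      have final : (M.length : ℝ) ≤ 10 * x ^ ((3:ℝ)/4) := by
        have h13 : (M.length : ℝ) ≤ 2 * (A : ℝ) + 2 * (K : ℝ) := by exact_mod_cast htA
        have h14 : 2 * (A : ℝ) ≤ x / T + K * T := by
          rw [← e5]; linarith
        rw [e6] at h14
        linarith
      have h15 : (M.length : ℝ) ≤ ((10 * ⌈x ^ ((3:ℝ)/4)⌉₊ : ℕ) : ℝ) := by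
        push_cast
        have := Nat.le_ceil (x ^ ((3:ℝ)/4))
        linarith
      exact_mod_cast h15
    · intro p
      have hsub : {i : Fin n | (⟨M.findIdx (fun d => decide (i ∈ d)), hlt i⟩ : Fin M.length) = p}
          ⊆ (↑(M[(p : ℕ)]'p.isLt) : Set (Fin n)) := by
        intro i hi
        simp only [Set.mem_setOf_eq] at hi
        subst hi
        have h1 : (fun d => decide (i ∈ d)) (M[M.findIdx (fun d => decide (i ∈ d))]'(hlt i))
            = true := List.findIdx_getElem (p := fun d => decide (i ∈ d)) (xs := M) (w := hlt i)
        simpa using h1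
      obtain ⟨h1, h2⟩ := hprop (M[(p : ℕ)]'p.isLt) (List.getElem_mem p.isLt)
      constructor
      · rcases h1 with h | h
        · exact Or.inl (h.mono hsub)
        · exact Or.inr (h.mono hsub)
      · rcases h2 with h | h
        · exact Or.inl (h.mono hsub)
        · exact Or.inr (h.mono hsub)
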